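/- For ζ = ξ + iη ∈ ℂ^{n+1} with ξ, η ∈ ℝ^{n+1}: the set γ_ℂ(ζ) = {x ∈ ℝ^{n+1} : |x − ζ|_ℂ² = 0} is contained in the open Euclidean unit ball B_1(0) ⊂ ℝ^{n+1} if and only if ζ belongs to the Lie ball L_{n+1}, i.e. |ξ|² + |η|² + 2(|ξ|²|η|² − ⟨ξ,η⟩²)^{1/2} < 1. -/

import Mathlib

open scoped RealInnerProductSpace

section Aux

variable {F : Type*} [NormedAddCommGroup F] [InnerProductSpace ℝ F]

lemma proj_inner (ξ η : F) (hη : η ≠ 0) :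
    ⟪ξ - (⟪ξ, η⟫ / ‖η‖ ^ 2) • η, η⟫ = 0 := by
  have hb : ‖η‖ ≠ 0 := norm_ne_zero_iff.mpr hη
  rw [inner_sub_left, real_inner_smul_left, ← real_inner_self_eq_norm_sq]
  have : (⟪η, η⟫ : ℝ) ≠ 0 := by
    rw [real_inner_self_eq_norm_sq]; positivity
  field_simp
  ring

lemma proj_norm (ξ η : F) (hη : η ≠ 0) :
    ‖ξ - (⟪ξ, η⟫ / ‖η‖ ^ 2) • η‖ ^ 2 * ‖η‖ ^ 2 = ‖ξ‖ ^ 2 * ‖η‖ ^ 2 - ⟪ξ, η⟫ ^ 2 := by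
  have hb : (0:ℝ) < ‖η‖ := norm_pos_iff.mpr hη
  rw [← real_inner_self_eq_norm_sq (ξ - _)]
  rw [inner_sub_left, inner_sub_right, inner_sub_right, real_inner_smul_left,
    real_inner_smul_left, real_inner_smul_right, real_inner_smul_right,
    real_inner_self_eq_norm_sq ξ, real_inner_self_eq_norm_sq η, real_inner_comm η ξ]
  field_simp
  ring

lemma sqrt_arg_nonneg (ξ η : F) : 0 ≤ ‖ξ‖ ^ 2 * ‖η‖ ^ 2 - ⟪ξ, η⟫ ^ 2 := by
  have h := abs_real_inner_le_norm ξ η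
  nlinarith [abs_nonneg (⟪ξ, η⟫ : ℝ), sq_abs (⟪ξ, η⟫ : ℝ), norm_nonneg ξ, norm_nonneg η]

lemma proj_norm_sqrt (ξ η : F) (hη : η ≠ 0) :
    ‖ξ - (⟪ξ, η⟫ / ‖η‖ ^ 2) • η‖ * ‖η‖ = Real.sqrt (‖ξ‖ ^ 2 * ‖η‖ ^ 2 - ⟪ξ, η⟫ ^ 2) := by
  rw [← proj_norm ξ η hη, show ‖ξ - (⟪ξ, η⟫ / ‖η‖ ^ 2) • η‖ ^ 2 * ‖η‖ ^ 2
      = (‖ξ - (⟪ξ, η⟫ / ‖η‖ ^ 2) • η‖ * ‖η‖) ^ 2 by ring]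
  exact (Real.sqrt_sq (by positivity)).symm

lemma geom_iff [FiniteDimensional ℝ F] (hdim : 2 ≤ Module.finrank ℝ F) (ξ η : F) :
    ({x : F | ‖x - ξ‖ ^ 2 = ‖η‖ ^ 2 ∧ ⟪x - ξ, η⟫ = 0} ⊆ Metric.ball (0 : F) 1) ↔
    ‖ξ‖ ^ 2 + ‖η‖ ^ 2 + 2 * Real.sqrt (‖ξ‖ ^ 2 * ‖η‖ ^ 2 - ⟪ξ, η⟫ ^ 2) < 1 := by
  have hD0 := sqrt_arg_nonneg ξ η
  have hs0 : 0 ≤ Real.sqrt (‖ξ‖ ^ 2 * ‖η‖ ^ 2 - ⟪ξ, η⟫ ^ 2) := Real.sqrt_nonneg _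
  constructor
  · intro hsub
    by_cases hη : η = 0
    · have hxi : ξ ∈ Metric.ball (0 : F) 1 := hsub (by simp [hη])
      rw [Metric.mem_ball, dist_zero_right] at hxi
      have : Real.sqrt (‖ξ‖ ^ 2 * ‖η‖ ^ 2 - ⟪ξ, η⟫ ^ 2) = 0 := by
        simp [hη]
      rw [this, hη]
      simp only [norm_zero]
      nlinarith [norm_nonneg ξ]
    · have hbpos : (0:ℝ) < ‖η‖ := norm_pos_iff.mpr hη
      have hPη := proj_inner ξ η hη
      have hPbs := proj_norm_sqrt ξ η hη
      by_cases hPz : ξ - (⟪ξ, η⟫ / ‖η‖ ^ 2) • η = 0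
      · -- ξ parallel to η
        have hss : Real.sqrt (‖ξ‖ ^ 2 * ‖η‖ ^ 2 - ⟪ξ, η⟫ ^ 2) = 0 := by
          rw [← hPbs, hPz, norm_zero, zero_mul]
        have hξ : ξ = (⟪ξ, η⟫ / ‖η‖ ^ 2) • η := sub_eq_zero.mp hPz
        obtain ⟨w, hwmem, hwne⟩ : ∃ w ∈ (ℝ ∙ η)ᗮ, w ≠ 0 := by
          have h1 : Module.finrank ℝ (ℝ ∙ η : Submodule ℝ F) = 1 := finrank_span_singleton hη
          have h2 := Submodule.finrank_add_finrank_orthogonal (K := (ℝ ∙ η : Submodule ℝ F))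
          rw [h1] at h2
          have hrank : Module.finrank ℝ ((ℝ ∙ η)ᗮ : Submodule ℝ F) ≠ 0 := by omega
          have hbot : ((ℝ ∙ η)ᗮ : Submodule ℝ F) ≠ ⊥ := by
            intro h
            rw [h] at hrank
            simp at hrank
          exact Submodule.exists_mem_ne_zero_of_ne_bot hbot
        have hwη : ⟪η, w⟫ = 0 := hwmem η (Submodule.mem_span_singleton_self η)
        have hun : ‖(‖w‖⁻¹ • w : F)‖ = 1 := norm_smul_inv_norm hwne
        have huη : ⟪(‖w‖⁻¹ • w : F), η⟫ = 0 := by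
          rw [real_inner_smul_left, real_inner_comm, hwη, mul_zero]
        have hxs : (ξ + ‖η‖ • (‖w‖⁻¹ • w)) - ξ = ‖η‖ • (‖w‖⁻¹ • w) := by abel
        have hxmem : ξ + ‖η‖ • (‖w‖⁻¹ • w) ∈ Metric.ball (0 : F) 1 := by
          apply hsub
          refine ⟨?_, ?_⟩
          · rw [hxs, norm_smul, hun, Real.norm_eq_abs, abs_of_pos hbpos, mul_one]
          · rw [hxs, real_inner_smul_left, huη, mul_zero]
        rw [Metric.mem_ball, dist_zero_right] at hxmem
        have hξu : ⟪ξ, (‖w‖⁻¹ • w : F)⟫ = 0 := by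
          rw [hξ, real_inner_smul_left, real_inner_smul_right, hwη]
          ring
        have hxn : ‖ξ + ‖η‖ • (‖w‖⁻¹ • w)‖ ^ 2 = ‖ξ‖ ^ 2 + ‖η‖ ^ 2 := by
          rw [norm_add_sq_real, real_inner_smul_right, hξu, mul_zero,
            norm_smul, hun, Real.norm_eq_abs, abs_of_pos hbpos, mul_one]
          ring
        rw [hss]
        nlinarith [norm_nonneg (ξ + ‖η‖ • (‖w‖⁻¹ • w))]
      · have hPnpos : (0:ℝ) < ‖ξ - (⟪ξ, η⟫ / ‖η‖ ^ 2) • η‖ := norm_pos_iff.mpr hPz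
        have hξP : ⟪ξ, ξ - (⟪ξ, η⟫ / ‖η‖ ^ 2) • η⟫
            = ‖ξ - (⟪ξ, η⟫ / ‖η‖ ^ 2) • η‖ ^ 2 := by
          have hηP : ⟪η, ξ - (⟪ξ, η⟫ / ‖η‖ ^ 2) • η⟫ = 0 := by
            rw [real_inner_comm (ξ - (⟪ξ, η⟫ / ‖η‖ ^ 2) • η) η]; exact hPη
          nth_rewrite 1 [show ξ = (ξ - (⟪ξ, η⟫ / ‖η‖ ^ 2) • η) + (⟪ξ, η⟫ / ‖η‖ ^ 2) • η by abel]
          rw [inner_add_left, real_inner_smul_left, hηP, mul_zero, add_zero,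
            real_inner_self_eq_norm_sq]
        set t : ℝ := ‖η‖ / ‖ξ - (⟪ξ, η⟫ / ‖η‖ ^ 2) • η‖ with ht
        have htpos : 0 < t := by positivity
        have hxs : (ξ + t • (ξ - (⟪ξ, η⟫ / ‖η‖ ^ 2) • η)) - ξ
            = t • (ξ - (⟪ξ, η⟫ / ‖η‖ ^ 2) • η) := by abel
        have hxmem : ξ + t • (ξ - (⟪ξ, η⟫ / ‖η‖ ^ 2) • η) ∈ Metric.ball (0 : F) 1 := by
          apply hsub
          refine ⟨?_, ?_⟩
          · rw [hxs, norm_smul, Real.norm_eq_abs, abs_of_pos htpos, ht]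
            field_simp
          · rw [hxs, real_inner_smul_left, hPη, mul_zero]
        rw [Metric.mem_ball, dist_zero_right] at hxmem
        have hxn : ‖ξ + t • (ξ - (⟪ξ, η⟫ / ‖η‖ ^ 2) • η)‖ ^ 2
            = ‖ξ‖ ^ 2 + ‖η‖ ^ 2 + 2 * Real.sqrt (‖ξ‖ ^ 2 * ‖η‖ ^ 2 - ⟪ξ, η⟫ ^ 2) := by
          rw [norm_add_sq_real, real_inner_smul_right, hξP, norm_smul,
            Real.norm_eq_abs, abs_of_pos htpos, ← hPbs, ht]
          field_simp
          ring
        nlinarith [norm_nonneg (ξ + t • (ξ - (⟪ξ, η⟫ / ‖η‖ ^ 2) • η))]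
  · intro hlt x hx
    obtain ⟨h1, h2⟩ := hx
    have hkey : ⟪ξ, x - ξ⟫ ≤ Real.sqrt (‖ξ‖ ^ 2 * ‖η‖ ^ 2 - ⟪ξ, η⟫ ^ 2) := by
      by_cases hη : η = 0
      · have hv0 : x - ξ = 0 := by
          have h0 : ‖x - ξ‖ ^ 2 = 0 := by rw [h1, hη, norm_zero]; ring
          have := pow_eq_zero_iff (n := 2) (by norm_num) |>.mp h0
          exact norm_eq_zero.mp this
        rw [hv0, inner_zero_right]
        exact hs0
      · have hbpos : (0:ℝ) < ‖η‖ := norm_pos_iff.mpr hη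
        have hPbs := proj_norm_sqrt ξ η hη
        have hvb : ‖x - ξ‖ = ‖η‖ := by
          nlinarith [norm_nonneg (x - ξ)]
        have hiv : ⟪ξ, x - ξ⟫ = ⟪ξ - (⟪ξ, η⟫ / ‖η‖ ^ 2) • η, x - ξ⟫ := by
          rw [inner_sub_left, real_inner_smul_left, real_inner_comm (x - ξ) η, h2,
            mul_zero, sub_zero]
        calc ⟪ξ, x - ξ⟫ = ⟪ξ - (⟪ξ, η⟫ / ‖η‖ ^ 2) • η, x - ξ⟫ := hiv
          _ ≤ ‖ξ - (⟪ξ, η⟫ / ‖η‖ ^ 2) • η‖ * ‖x - ξ‖ := real_inner_le_norm _ _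
          _ = Real.sqrt (‖ξ‖ ^ 2 * ‖η‖ ^ 2 - ⟪ξ, η⟫ ^ 2) := by rw [hvb, hPbs]
    rw [Metric.mem_ball, dist_zero_right]
    have hxn : ‖x‖ ^ 2 = ‖ξ‖ ^ 2 + 2 * ⟪ξ, x - ξ⟫ + ‖x - ξ‖ ^ 2 := by
      nth_rewrite 1 [show x = ξ + (x - ξ) by abel]
      rw [norm_add_sq_real]
    nlinarith [norm_nonneg x]

end Aux

lemma mem_iff' (n : ℕ) (ξ η x : EuclideanSpace ℝ (Fin (n + 1))) :
    (∑ j, ((x j : ℂ) - ((ξ j : ℂ) + (η j : ℂ) * Complex.I)) ^ 2 = 0) ↔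
      ‖x - ξ‖ ^ 2 = ‖η‖ ^ 2 ∧ ⟪x - ξ, η⟫ = 0 := by
  have key : (∑ j, ((x j : ℂ) - ((ξ j : ℂ) + (η j : ℂ) * Complex.I)) ^ 2) =
      ((∑ j, ((x j - ξ j) ^ 2 - η j ^ 2) : ℝ) : ℂ) +
      ((∑ j, (-2 * (x j - ξ j) * η j) : ℝ) : ℂ) * Complex.I := by
    push_cast
    rw [Finset.sum_mul, ← Finset.sum_add_distrib]
    refine Finset.sum_congr rfl fun j _ => by
      linear_combination (η j : ℂ) ^ 2 * Complex.I_sq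
  have hA : (∑ j, ((x j - ξ j) ^ 2 - η j ^ 2) : ℝ) = ‖x - ξ‖ ^ 2 - ‖η‖ ^ 2 := by
    rw [← real_inner_self_eq_norm_sq, ← real_inner_self_eq_norm_sq]
    simp only [PiLp.inner_apply, RCLike.inner_apply, starRingEnd_apply, star_trivial,
      PiLp.sub_apply, Finset.sum_sub_distrib, sq]
  have hB : (∑ j, (-2 * (x j - ξ j) * η j) : ℝ) = -2 * ⟪x - ξ, η⟫ := by
    simp only [PiLp.inner_apply, RCLike.inner_apply, starRingEnd_apply, star_trivial,
      PiLp.sub_apply, Finset.mul_sum]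
    exact Finset.sum_congr rfl fun j _ => by ring
  rw [key, hA, hB, ← Complex.mk_eq_add_mul_I]
  simp [Complex.ext_iff, sub_eq_zero]

/-- For `ζ = ξ + iη ∈ ℂ^{n+1}` (`n ≥ 1`), the set
`γ_ℂ(ζ) = {x ∈ ℝ^{n+1} : |x − ζ|_ℂ² = 0}` is contained in the open Euclidean unit ball
if and only if `|ξ|² + |η|² + 2(|ξ|²|η|² − ⟨ξ,η⟩²)^{1/2} < 1`, i.e. `ζ ∈ L_{n+1}`. -/
theorem gammaC_subset_ball_iff_mem_lieBall (n : ℕ) (hn : 1 ≤ n)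
    (ξ η : EuclideanSpace ℝ (Fin (n + 1))) :
    {x : EuclideanSpace ℝ (Fin (n + 1)) |
        ∑ j, ((x j : ℂ) - ((ξ j : ℂ) + (η j : ℂ) * Complex.I)) ^ 2 = 0} ⊆
      Metric.ball (0 : EuclideanSpace ℝ (Fin (n + 1))) 1 ↔
    ‖ξ‖ ^ 2 + ‖η‖ ^ 2 + 2 * Real.sqrt (‖ξ‖ ^ 2 * ‖η‖ ^ 2 - ⟪ξ, η⟫ ^ 2) < 1 := by
  have hset : {x : EuclideanSpace ℝ (Fin (n + 1)) |
        ∑ j, ((x j : ℂ) - ((ξ j : ℂ) + (η j : ℂ) * Complex.I)) ^ 2 = 0} =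
      {x : EuclideanSpace ℝ (Fin (n + 1)) | ‖x - ξ‖ ^ 2 = ‖η‖ ^ 2 ∧ ⟪x - ξ, η⟫ = 0} :=
    Set.ext fun x => mem_iff' n ξ η x
  rw [hset]
  exact geom_iff (by rw [finrank_euclideanSpace_fin]; omega) ξ η
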